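/- Let n ≥ 1, N ≥ 1, let σ : ℝⁿ → ℝⁿ be a function, let q ∈ Λ, let p, β ∈ ℝⁿ, and let λ > 0. Let Q ⊆ ℝᴺ be a measurable set with 0 < |Q| < ∞. Suppose F_j, G_j : Q → ℝⁿ are square-integrable functions (j ∈ ℕ) such that: ∫_Q F_j = 0, ∫_Q G_j = 0, ∫_Q G_j(y)·F_j(y) dy = 0, ‖F_j‖_{L²(Q)} ≤ λ for all j; the functions H_j(y) := β + G_j(y) − σ(p + F_j(y)) are square-integrable on Q; and ∫_Q |H_j(y)|² dy → 0 as j → ∞. Then (β − σ(q))·(p − q) ≥ 0. -/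

import Mathlib

open MeasureTheory
open scoped RealInnerProductSpace

section Helpers

variable {α : Type*} {m : MeasurableSpace α} {μ : MeasureTheory.Measure α}
  {E : Type*} [NormedAddCommGroup E] [InnerProductSpace ℝ E]

lemma integrable_inner₂ {f g : α → E} (hf : MemLp f 2 μ) (hg : MemLp g 2 μ) :
    Integrable (fun x => ⟪f x, g x⟫) μ := by
  have h := L2.integrable_inner (𝕜 := ℝ) (hf.toLp f) (hg.toLp g)
  refine h.congr ?_
  filter_upwards [hf.coeFn_toLp, hg.coeFn_toLp] with x hx hy
  rw [hx, hy]

lemma norm_toLp_two {f : α → E} (hf : MemLp f 2 μ) :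
    ‖hf.toLp f‖ = Real.sqrt (∫ x, ‖f x‖ ^ 2 ∂μ) := by
  have h1 : ⟪hf.toLp f, hf.toLp f⟫ = ∫ x, ‖f x‖ ^ 2 ∂μ := by
    rw [L2.inner_def]
    refine integral_congr_ae ?_
    filter_upwards [hf.coeFn_toLp] with x hx
    rw [hx, real_inner_self_eq_norm_sq]
  rw [norm_eq_sqrt_real_inner, h1]

lemma abs_integral_inner_le {f g : α → E} (hf : MemLp f 2 μ) (hg : MemLp g 2 μ) :
    |∫ x, ⟪f x, g x⟫ ∂μ| ≤
      Real.sqrt (∫ x, ‖f x‖ ^ 2 ∂μ) * Real.sqrt (∫ x, ‖g x‖ ^ 2 ∂μ) := by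
  have h1 : ∫ x, ⟪f x, g x⟫ ∂μ = ⟪hf.toLp f, hg.toLp g⟫ := by
    rw [L2.inner_def]
    refine integral_congr_ae ?_
    filter_upwards [hf.coeFn_toLp, hg.coeFn_toLp] with x hx hy
    rw [hx, hy]
  rw [h1, ← norm_toLp_two hf, ← norm_toLp_two hg]
  exact abs_real_inner_le_norm _ _

end Helpers

/-- If `q ∈ Λ`, `‖F_j‖_{L²(Q)} ≤ λ`, `F_j, G_j` have zero mean over `Q`,
`∫_Q G_j·F_j = 0`, and `∫_Q ‖β + G_j - σ(p + F_j)‖² → 0`, then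
`(β - σ(q))·(p - q) ≥ 0`. -/
theorem stmt7 (n N : ℕ) (hn : 1 ≤ n) (hN : 1 ≤ N)
    (σ : EuclideanSpace ℝ (Fin n) → EuclideanSpace ℝ (Fin n))
    (q : EuclideanSpace ℝ (Fin n))
    (hq : ∀ r, 0 ≤ ⟪σ r - σ q, r - q⟫)
    (p β : EuclideanSpace ℝ (Fin n))
    (lam : ℝ) (hlam : 0 < lam)
    (Q : Set (EuclideanSpace ℝ (Fin N))) (hQm : MeasurableSet Q)
    (hQ0 : 0 < volume Q) (hQtop : volume Q < ⊤)
    (F G : ℕ → EuclideanSpace ℝ (Fin N) → EuclideanSpace ℝ (Fin n))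
    (hF : ∀ j, MemLp (F j) 2 (volume.restrict Q))
    (hG : ∀ j, MemLp (G j) 2 (volume.restrict Q))
    (hF0 : ∀ j, ∫ y in Q, F j y = 0) (hG0 : ∀ j, ∫ y in Q, G j y = 0)
    (hGF : ∀ j, ∫ y in Q, ⟪G j y, F j y⟫ = 0)
    (hFlam : ∀ j, ∫ y in Q, ‖F j y‖ ^ 2 ≤ lam ^ 2)
    (hH : ∀ j, MemLp (fun y => β + G j y - σ (p + F j y)) 2 (volume.restrict Q))
    (hHto0 : Filter.Tendsto (fun j => ∫ y in Q, ‖β + G j y - σ (p + F j y)‖ ^ 2)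
      Filter.atTop (nhds 0)) :
    0 ≤ ⟪β - σ q, p - q⟫ := by
  haveI : IsFiniteMeasure (volume.restrict Q) :=
    ⟨by rwa [Measure.restrict_apply_univ]⟩
  set v : EuclideanSpace ℝ (Fin n) := p - q with hv
  set c : ℝ := ⟪β - σ q, v⟫ with hc
  set A : ℕ → ℝ := fun j => ∫ y in Q, ‖β + G j y - σ (p + F j y)‖ ^ 2 with hA
  have hA0 : ∀ j, 0 ≤ A j := fun j =>
    setIntegral_nonneg hQm fun y _ => sq_nonneg _
  set CC : ℝ := 2 * ‖v‖ ^ 2 * (volume Q).toReal + 2 * lam ^ 2 with hCC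
  have hCC0 : 0 ≤ CC := by
    have := ENNReal.toReal_nonneg (a := volume Q)
    positivity
  -- the shifted function
  have hwmem : ∀ j, MemLp (fun y => v + F j y) 2 (volume.restrict Q) := fun j =>
    (memLp_const v).add (hF j)
  -- bound on ∫ ‖v + F j‖²
  have hB : ∀ j, ∫ y in Q, ‖v + F j y‖ ^ 2 ≤ CC := by
    intro j
    have int1 : Integrable (fun y => ‖v + F j y‖ ^ 2) (volume.restrict Q) :=
      (memLp_two_iff_integrable_sq_norm (hwmem j).1).mp (hwmem j)
    have int2 : Integrable (fun y => 2 * ‖v‖ ^ 2 + 2 * ‖F j y‖ ^ 2) (volume.restrict Q) := by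
      refine (integrable_const _).add ?_
      exact (((memLp_two_iff_integrable_sq_norm (hF j).1).mp (hF j)).const_mul 2)
    have hpt : ∀ y, ‖v + F j y‖ ^ 2 ≤ 2 * ‖v‖ ^ 2 + 2 * ‖F j y‖ ^ 2 := by
      intro y
      have h1 : ‖v + F j y‖ ≤ ‖v‖ + ‖F j y‖ := norm_add_le _ _
      nlinarith [mul_self_le_mul_self (norm_nonneg (v + F j y)) h1,
        sq_nonneg (‖v‖ - ‖F j y‖), norm_nonneg (v + F j y)]
    calc ∫ y in Q, ‖v + F j y‖ ^ 2
        ≤ ∫ y in Q, (2 * ‖v‖ ^ 2 + 2 * ‖F j y‖ ^ 2) :=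
          integral_mono int1 int2 hpt
      _ = 2 * ‖v‖ ^ 2 * (volume Q).toReal + 2 * ∫ y in Q, ‖F j y‖ ^ 2 := by
          rw [integral_add (integrable_const _)
            ((((memLp_two_iff_integrable_sq_norm (hF j).1).mp (hF j)).const_mul 2)),
            integral_const, integral_const_mul]
          simp [Measure.restrict_apply_univ, mul_comm, Measure.real]
      _ ≤ CC := by
          have := hFlam j
          rw [hCC]; nlinarith
  -- the key inequality for each j
  have hkey : ∀ j, -(Real.sqrt (A j) * Real.sqrt CC) ≤ (volume Q).toReal * c := by
    intro j
    set H : EuclideanSpace ℝ (Fin N) → EuclideanSpace ℝ (Fin n) :=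
      fun y => β + G j y - σ (p + F j y) with hHdef
    set d : ℝ := ∫ y in Q, ⟪H y, v + F j y⟫ with hd
    have hFi : Integrable (F j) (volume.restrict Q) := (hF j).integrable one_le_two
    have hGi : Integrable (G j) (volume.restrict Q) := (hG j).integrable one_le_two
    -- nonnegativity from monotonicity at q
    have hnonneg : 0 ≤ ∫ y in Q, ⟪σ (p + F j y) - σ q, v + F j y⟫ := by
      refine setIntegral_nonneg hQm fun y _ => ?_
      have := hq (p + F j y)
      rwa [add_sub_right_comm] at this
    -- pointwise expansion
    have hpt : ∀ y, ⟪σ (p + F j y) - σ q, v + F j y⟫ =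
        ⟪β - σ q, v⟫ + ⟪β - σ q, F j y⟫ + (⟪G j y, v⟫ + ⟪G j y, F j y⟫)
          - ⟪H y, v + F j y⟫ := by
      intro y
      simp only [hHdef, inner_sub_left, inner_add_left, inner_add_right]
      ring
    have i1 : Integrable (fun _ : EuclideanSpace ℝ (Fin N) => ⟪β - σ q, v⟫)
        (volume.restrict Q) := integrable_const _
    have i2 : Integrable (fun y => ⟪β - σ q, F j y⟫) (volume.restrict Q) :=
      hFi.const_inner _
    have i3a : Integrable (fun y => ⟪G j y, v⟫) (volume.restrict Q) :=
      hGi.inner_const _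
    have i3b : Integrable (fun y => ⟪G j y, F j y⟫) (volume.restrict Q) :=
      integrable_inner₂ (hG j) (hF j)
    have i4 : Integrable (fun y => ⟪H y, v + F j y⟫) (volume.restrict Q) :=
      integrable_inner₂ (hH j) (hwmem j)
    have hsplit : ∫ y in Q, ⟪σ (p + F j y) - σ q, v + F j y⟫
        = (volume Q).toReal * c - d := by
      have i12 : Integrable (fun y => ⟪β - σ q, v⟫ + ⟪β - σ q, F j y⟫)
          (volume.restrict Q) := i1.add i2
      have i34 : Integrable (fun y => ⟪G j y, v⟫ + ⟪G j y, F j y⟫)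
          (volume.restrict Q) := i3a.add i3b
      have iL : Integrable (fun y => ⟪β - σ q, v⟫ + ⟪β - σ q, F j y⟫
          + (⟪G j y, v⟫ + ⟪G j y, F j y⟫)) (volume.restrict Q) := i12.add i34
      rw [integral_congr_ae (Filter.Eventually.of_forall hpt),
        integral_sub iL i4, integral_add i12 i34,
        integral_add i1 i2, integral_add i3a i3b]
      have e1 : ∫ _ in Q, ⟪β - σ q, v⟫ = (volume Q).toReal * c := by
        rw [integral_const]
        simp [Measure.restrict_apply_univ, hc, smul_eq_mul, Measure.real]
      have e2 : ∫ y in Q, ⟪β - σ q, F j y⟫ = 0 := by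
        rw [integral_inner hFi, hF0 j, inner_zero_right]
      have e3a : ∫ y in Q, ⟪G j y, v⟫ = 0 := by
        have : ∫ y in Q, ⟪G j y, v⟫ = ∫ y in Q, ⟪v, G j y⟫ :=
          integral_congr_ae (Filter.Eventually.of_forall fun y => real_inner_comm _ _)
        rw [this, integral_inner hGi, hG0 j, inner_zero_right]
      rw [e1, e2, e3a, hGF j, hd]
      ring
    -- Cauchy–Schwarz bound on d
    have hcs : |d| ≤ Real.sqrt (A j) * Real.sqrt CC := by
      have h1 := abs_integral_inner_le (hH j) (hwmem j)
      refine h1.trans ?_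
      have h2 : Real.sqrt (∫ y in Q, ‖v + F j y‖ ^ 2) ≤ Real.sqrt CC :=
        Real.sqrt_le_sqrt (hB j)
      exact mul_le_mul_of_nonneg_left h2 (Real.sqrt_nonneg _)
    have : -(Real.sqrt (A j) * Real.sqrt CC) ≤ d := by
      have := neg_abs_le d
      linarith
    rw [hsplit] at hnonneg
    linarith
  -- pass to the limit
  have hsqrt : Filter.Tendsto (fun j => Real.sqrt (A j)) Filter.atTop (nhds 0) := by
    have := (Real.continuous_sqrt.continuousAt (x := (0 : ℝ))).tendsto.comp hHto0
    rw [Real.sqrt_zero] at this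
    exact this
  have hlim : Filter.Tendsto (fun j => -(Real.sqrt (A j) * Real.sqrt CC))
      Filter.atTop (nhds 0) := by
    have := (hsqrt.mul_const (Real.sqrt CC)).neg
    simpa using this
  have hmain : (0 : ℝ) ≤ (volume Q).toReal * c := le_of_tendsto' hlim hkey
  have hQpos : 0 < (volume Q).toReal := ENNReal.toReal_pos hQ0.ne' hQtop.ne
  nlinarith
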